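/- Suppose rank[Z(k); U(k)] = n+m for k = 0,…,T−1 and that R(k) = A(k)V(k) − V(k+1) − D(k) satisfies the quadratic bound Q_r(k) + S_r(k)R(k)ᵀ + R(k)S_r(k)ᵀ + R(k)R_r(k)R(k)ᵀ ⪰ 0 for k = 0,…,T−1, where Q_r(k) ∈ ℝ^{n×n}, S_r(k) ∈ ℝ^{n×L} and R_r(k) ∈ ℝ^{L×L} with R_r(k) ≺ 0. Let η ≥ 1 and ρ > η be finite constants, and suppose Y(k) ∈ ℝ^{L×n} and symmetric P(k) satisfy: (i) the 3×3 block matrix [[P(k+1) − I_n − Q_r(k), −S_r(k), Z(k+1)Y(k)], [−S_r(k)ᵀ, −R_r(k), Y(k)], [Y(k)ᵀZ(k+1)ᵀ, Y(k)ᵀ, P(k)]] ≻ 0 and Z(k)Y(k) = P(k) for k = 0,…,T−1; (ii) ηI_n ⪯ P(k) ⪯ ρI_n for k = 0,…,T. Let b be such that ‖B(j)‖ ≤ b for j = 0,…,T−1, and set K(k) = U(k)Y(k)P(k)^{−1}. Then every trajectory of x(k+1) = (A(k)+B(k)K(k))x(k) + B(k)K(k)v(k) + d(k) satisfies, for k =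 0,…,T: ‖x(k)‖ ≤ √(ρ/η)·(1 − 1/ρ)^{k/2}·‖x(0)‖ + b·(Σ_{j=0}^{k−1} √(ρ/η)·(1 − 1/ρ)^{(k−1−j)/2}·‖K(j)‖)·|v|_{k−1} + (Σ_{j=0}^{k−1} √(ρ/η)·(1 − 1/ρ)^{(k−1−j)/2})·|d|_{k−1}, with |v|_{k−1} = sup{‖v(j)‖ : 0 ≤ j ≤ k−1} and |d|_{k−1} = sup{‖d(j)‖ : 0 ≤ j ≤ k−1}. -/

import Mathlib

open Matrix

set_option linter.unusedSectionVars false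
set_option linter.unusedVariables false
set_option maxHeartbeats 1600000

section AuxMatrix
variable {ι κ : Type*} [Fintype ι] [Fintype κ] [DecidableEq ι] [DecidableEq κ]

lemma myPosDef_smul {c : ℝ} (hc : 0 < c) {M : Matrix ι ι ℝ} (hM : M.PosDef) :
    (c • M).PosDef := by
  refine Matrix.PosDef.of_dotProduct_mulVec_pos ?_ (fun x hx => ?_)
  · unfold Matrix.IsHermitian
    rw [conjTranspose_smul, hM.1.eq]; simp
  · have := hM.dotProduct_mulVec_pos hx
    simp only [smul_mulVec, dotProduct_smul, smul_eq_mul]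
    positivity

lemma myPosSemidef_smul {c : ℝ} (hc : 0 ≤ c) {M : Matrix ι ι ℝ} (hM : M.PosSemidef) :
    (c • M).PosSemidef := by
  refine Matrix.PosSemidef.of_dotProduct_mulVec_nonneg ?_ (fun x => ?_)
  · unfold Matrix.IsHermitian
    rw [conjTranspose_smul, hM.1.eq]; simp
  · have := hM.dotProduct_mulVec_nonneg x
    simp only [smul_mulVec, dotProduct_smul, smul_eq_mul]
    positivity

lemma mySmul_inv {c : ℝ} (hc : c ≠ 0) {M : Matrix ι ι ℝ} (hM : IsUnit M.det) :
    (c • M)⁻¹ = c⁻¹ • M⁻¹ := by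
  apply Matrix.inv_eq_right_inv
  rw [Matrix.smul_mul, Matrix.mul_smul, M.mul_nonsing_inv hM, smul_smul,
    mul_inv_cancel₀ hc, one_smul]

lemma mySchur_swap {A : Matrix ι ι ℝ} {Bm : Matrix ι κ ℝ} {Dm : Matrix κ κ ℝ}
    (hA : A.PosDef) (hD : Dm.PosDef) (h : (Dm - Bmᴴ * A⁻¹ * Bm).PosSemidef) :
    (A - Bm * Dm⁻¹ * Bmᴴ).PosSemidef := by
  letI := hA.isUnit.invertible
  letI := hD.isUnit.invertible
  exact (PosDef.fromBlocks₂₂ _ _ hD).mp ((PosDef.fromBlocks₁₁ _ _ hA).mpr h)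

lemma mySchur_swap' {A : Matrix ι ι ℝ} {Bm : Matrix ι κ ℝ} {Dm : Matrix κ κ ℝ}
    (hA : A.PosDef) (hD : Dm.PosDef) (h : (A - Bm * Dm⁻¹ * Bmᴴ).PosSemidef) :
    (Dm - Bmᴴ * A⁻¹ * Bm).PosSemidef := by
  letI := hA.isUnit.invertible
  letI := hD.isUnit.invertible
  exact (PosDef.fromBlocks₁₁ _ _ hA).mp ((PosDef.fromBlocks₂₂ _ _ hD).mpr h)

lemma myPosDef_one_smul {c : ℝ} (hc : 0 < c) : (c • (1 : Matrix ι ι ℝ)).PosDef := by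
  refine Matrix.PosDef.of_dotProduct_mulVec_pos ?_ (fun x hx => ?_)
  · unfold Matrix.IsHermitian
    rw [conjTranspose_smul, conjTranspose_one]; simp
  · simp only [smul_mulVec, one_mulVec, dotProduct_smul, smul_eq_mul]
    have hxx : 0 < star x ⬝ᵥ x := by
      have h2 := Matrix.PosDef.one (n := ι) (R := ℝ)
      simpa using h2.dotProduct_mulVec_pos hx
    have hst : star x = x := by simp
    rw [hst] at hxx
    positivity

/-- `P ⪯ ρ•1` implies `ρ⁻¹•1 ⪯ P⁻¹`. -/
lemma myInv_lower {ρ : ℝ} (hρ : 0 < ρ) {M : Matrix ι ι ℝ} (hM : M.PosDef)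
    (h : (ρ • (1 : Matrix ι ι ℝ) - M).PosSemidef) :
    (M⁻¹ - ρ⁻¹ • (1 : Matrix ι ι ℝ)).PosSemidef := by
  have hdet : IsUnit M.det := isUnit_iff_ne_zero.mpr hM.det_pos.ne'
  have key := mySchur_swap' (A := ρ • (1 : Matrix ι ι ℝ)) (Bm := (1 : Matrix ι ι ℝ))
    (Dm := M⁻¹) (myPosDef_one_smul hρ) hM.inv ?_
  · have h1 : ((1 : Matrix ι ι ℝ))ᴴ = 1 := conjTranspose_one
    rw [h1, Matrix.mul_one, Matrix.one_mul,
      mySmul_inv hρ.ne' (isUnit_iff_ne_zero.mpr (by simp)), inv_one] at key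
    exact key
  · rw [Matrix.nonsing_inv_nonsing_inv _ hdet, conjTranspose_one, Matrix.mul_one,
      Matrix.one_mul]
    exact h

/-- `η•1 ⪯ P` implies `P⁻¹ ⪯ η⁻¹•1`. -/
lemma myInv_upper {η : ℝ} (hη : 0 < η) {M : Matrix ι ι ℝ} (hM : M.PosDef)
    (h : (M - η • (1 : Matrix ι ι ℝ)).PosSemidef) :
    (η⁻¹ • (1 : Matrix ι ι ℝ) - M⁻¹).PosSemidef := by
  have key := mySchur_swap' (A := M) (Bm := (1 : Matrix ι ι ℝ))
    (Dm := η⁻¹ • (1 : Matrix ι ι ℝ)) hM (myPosDef_one_smul (by positivity)) ?_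
  · rw [conjTranspose_one, Matrix.mul_one, Matrix.one_mul] at key
    exact key
  · rw [conjTranspose_one, Matrix.mul_one,
      mySmul_inv (by positivity : (η⁻¹ : ℝ) ≠ 0) (isUnit_iff_ne_zero.mpr (by simp)),
      inv_inv, inv_one, Matrix.one_mul]
    exact h

/-- quadratic form of a matrix -/
def qf (W : Matrix ι ι ℝ) (x : ι → ℝ) : ℝ := x ⬝ᵥ (W *ᵥ x)

lemma qf_nonneg {W : Matrix ι ι ℝ} (hW : W.PosSemidef) (x : ι → ℝ) : 0 ≤ qf W x := by
  have := hW.dotProduct_mulVec_nonneg x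
  simpa [qf] using this

lemma qf_mono {W₁ W₂ : Matrix ι ι ℝ} (h : (W₂ - W₁).PosSemidef) (x : ι → ℝ) :
    qf W₁ x ≤ qf W₂ x := by
  have h2 := qf_nonneg h x
  simp only [qf, sub_mulVec, dotProduct_sub] at h2 ⊢
  linarith

lemma qf_smul (c : ℝ) (W : Matrix ι ι ℝ) (x : ι → ℝ) : qf (c • W) x = c * qf W x := by
  simp [qf, smul_mulVec, dotProduct_smul, smul_eq_mul]

lemma dot_symm {W : Matrix ι ι ℝ} (hW : W.IsHermitian) (x y : ι → ℝ) :
    x ⬝ᵥ (W *ᵥ y) = y ⬝ᵥ (W *ᵥ x) := by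
  have hWs : Wᵀ = W := by
    rw [← Matrix.conjTranspose_eq_transpose_of_trivial]; exact hW.eq
  calc x ⬝ᵥ (W *ᵥ y) = (x ᵥ* W) ⬝ᵥ y := by rw [dotProduct_mulVec]
    _ = (Wᵀ *ᵥ x) ⬝ᵥ y := by rw [Matrix.mulVec_transpose]
    _ = (W *ᵥ x) ⬝ᵥ y := by rw [hWs]
    _ = y ⬝ᵥ (W *ᵥ x) := dotProduct_comm _ _

lemma qf_conj (W : Matrix ι ι ℝ) (M : Matrix ι κ ℝ) (x : κ → ℝ) :
    qf W (M *ᵥ x) = qf (Mᵀ * W * M) x := by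
  rw [qf, qf]
  conv_rhs => rw [Matrix.mul_assoc, ← Matrix.mulVec_mulVec, dotProduct_mulVec,
    Matrix.vecMul_transpose, ← Matrix.mulVec_mulVec]

lemma qf_cs {W : Matrix ι ι ℝ} (hW : W.PosSemidef) (x y : ι → ℝ) :
    (x ⬝ᵥ (W *ᵥ y)) ^ 2 ≤ qf W x * qf W y := by
  have key : ∀ t : ℝ, 0 ≤ (y ⬝ᵥ (W *ᵥ y)) * (t * t) + (2 * (x ⬝ᵥ (W *ᵥ y))) * t
      + (x ⬝ᵥ (W *ᵥ x)) := by
    intro t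
    have h0 := qf_nonneg hW (x + t • y)
    have hsym := dot_symm hW.1 y x
    simp only [qf, mulVec_add, mulVec_smul, dotProduct_add, add_dotProduct,
      dotProduct_smul, smul_dotProduct, smul_eq_mul] at h0
    rw [hsym] at h0
    nlinarith [h0]
  have hd := discrim_le_zero key
  rw [discrim] at hd
  simp only [qf]
  nlinarith [hd]

lemma qf_sqrt_triangle {W : Matrix ι ι ℝ} (hW : W.PosSemidef) (x y : ι → ℝ) :
    Real.sqrt (qf W (x + y)) ≤ Real.sqrt (qf W x) + Real.sqrt (qf W y) := by
  have hx := qf_nonneg hW x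
  have hy := qf_nonneg hW y
  have hcs := qf_cs hW x y
  have hsle : x ⬝ᵥ (W *ᵥ y) ≤ Real.sqrt (qf W x) * Real.sqrt (qf W y) := by
    calc x ⬝ᵥ (W *ᵥ y) ≤ |x ⬝ᵥ (W *ᵥ y)| := le_abs_self _
      _ = Real.sqrt ((x ⬝ᵥ (W *ᵥ y)) ^ 2) := (Real.sqrt_sq_eq_abs _).symm
      _ ≤ Real.sqrt (qf W x * qf W y) := Real.sqrt_le_sqrt hcs
      _ = Real.sqrt (qf W x) * Real.sqrt (qf W y) := Real.sqrt_mul hx _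
  have hexp : qf W (x + y) ≤ (Real.sqrt (qf W x) + Real.sqrt (qf W y)) ^ 2 := by
    have hsym := dot_symm hW.1 y x
    have e1 : qf W (x + y) = qf W x + 2 * (x ⬝ᵥ (W *ᵥ y)) + qf W y := by
      simp only [qf, mulVec_add, dotProduct_add, add_dotProduct]
      rw [qf] at *
      nlinarith [hsym]
    rw [e1]
    nlinarith [Real.sq_sqrt hx, Real.sq_sqrt hy, hsle]
  calc Real.sqrt (qf W (x + y)) ≤ Real.sqrt ((Real.sqrt (qf W x) + Real.sqrt (qf W y)) ^ 2) :=
        Real.sqrt_le_sqrt hexp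
    _ = Real.sqrt (qf W x) + Real.sqrt (qf W y) := by
        rw [Real.sqrt_sq (by positivity)]

end AuxMatrix

lemma key_matrix_ineq {n L : ℕ}
    (Z₁ : Matrix (Fin n) (Fin L) ℝ)
    (Rk : Matrix (Fin n) (Fin L) ℝ) (Q : Matrix (Fin n) (Fin n) ℝ)
    (S : Matrix (Fin n) (Fin L) ℝ) (Rrk : Matrix (Fin L) (Fin L) ℝ)
    (Yk : Matrix (Fin L) (Fin n) ℝ) (P₀ P₁ : Matrix (Fin n) (Fin n) ℝ)
    (hP₀ : P₀.PosDef) (hP₀s : P₀.IsHermitian)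
    (hnoise : (Q + S * Rkᵀ + Rk * Sᵀ + Rk * Rrk * Rkᵀ).PosSemidef)
    (hLMI : (fromBlocks (fromBlocks (P₁ - 1 - Q) (-S) (-(Sᵀ)) (-Rrk))
              (fromRows (Z₁ * Yk) Yk) (fromCols (Ykᵀ * Z₁ᵀ) (Ykᵀ)) P₀).PosDef)
    (M : Matrix (Fin n) (Fin n) ℝ) (hM : M = (Z₁ + Rk) * (Yk * P₀⁻¹)) :
    (P₁ - 1 - M * P₀ * Mᵀ).PosSemidef := by
  have hdet : IsUnit P₀.det := isUnit_iff_ne_zero.mpr hP₀.det_pos.ne'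
  letI := hP₀.isUnit.invertible
  set Top : Matrix (Fin n ⊕ Fin L) (Fin n ⊕ Fin L) ℝ :=
    fromBlocks (P₁ - 1 - Q) (-S) (-(Sᵀ)) (-Rrk) with hTop
  set W : Matrix (Fin n ⊕ Fin L) (Fin n) ℝ := fromRows (Z₁ * Yk) Yk with hWdef
  have hW : fromCols (Ykᵀ * Z₁ᵀ) (Ykᵀ) = Wᴴ := by
    rw [hWdef, Matrix.conjTranspose_eq_transpose_of_trivial, transpose_fromRows,
      transpose_mul]
  have h1 : (fromBlocks Top W Wᴴ P₀).PosSemidef := by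
    rw [← hW]; exact hLMI.posSemidef
  have h2 : (Top - W * P₀⁻¹ * Wᴴ).PosSemidef :=
    (PosDef.fromBlocks₂₂ _ _ hP₀).mp h1
  set C : Matrix (Fin n) (Fin n ⊕ Fin L) ℝ :=
    fromCols (1 : Matrix (Fin n) (Fin n) ℝ) Rk with hCdef
  have h3 : (C * (Top - W * P₀⁻¹ * Wᴴ) * Cᴴ).PosSemidef :=
    h2.mul_mul_conjTranspose_same C
  have hCH : Cᴴ = fromRows (1 : Matrix (Fin n) (Fin n) ℝ) Rkᵀ := by
    rw [hCdef, Matrix.conjTranspose_eq_transpose_of_trivial, transpose_fromCols,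
      transpose_one]
  have hCW : C * W = (Z₁ + Rk) * Yk := by
    rw [hCdef, hWdef, fromCols_mul_fromRows, Matrix.one_mul, Matrix.add_mul]
  have hP₀t : P₀ᵀ = P₀ := by
    rw [← Matrix.conjTranspose_eq_transpose_of_trivial]; exact hP₀s.eq
  have hCTC : C * Top * Cᴴ
      = P₁ - 1 - Q - S * Rkᵀ - Rk * Sᵀ - Rk * Rrk * Rkᵀ := by
    rw [hCdef, hTop, fromCols_mul_fromBlocks, hCH, fromCols_mul_fromRows]
    simp only [Matrix.one_mul, Matrix.mul_one, Matrix.add_mul, Matrix.neg_mul,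
      Matrix.mul_neg, Matrix.mul_assoc]
    abel
  have hCWP : C * (W * P₀⁻¹ * Wᴴ) * Cᴴ = M * P₀ * Mᵀ := by
    have e1 : C * (W * P₀⁻¹ * Wᴴ) * Cᴴ = (C * W) * P₀⁻¹ * (C * W)ᴴ := by
      rw [conjTranspose_mul]
      simp only [Matrix.mul_assoc]
    rw [e1, hCW, hM]
    have hMt : ((Z₁ + Rk) * (Yk * P₀⁻¹))ᵀ = P₀⁻¹ * (Ykᵀ * (Z₁ + Rk)ᵀ) := by
      rw [transpose_mul, transpose_mul, transpose_nonsing_inv, hP₀t, Matrix.mul_assoc]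
    rw [hMt, Matrix.conjTranspose_eq_transpose_of_trivial, transpose_mul]
    calc (Z₁ + Rk) * Yk * P₀⁻¹ * (Ykᵀ * (Z₁ + Rk)ᵀ)
        = (Z₁ + Rk) * (Yk * P₀⁻¹) * ((P₀ * P₀⁻¹) * (Ykᵀ * (Z₁ + Rk)ᵀ)) := by
          rw [P₀.mul_nonsing_inv hdet, Matrix.one_mul]
          simp only [Matrix.mul_assoc]
      _ = (Z₁ + Rk) * (Yk * P₀⁻¹) * (P₀ * (P₀⁻¹ * (Ykᵀ * (Z₁ + Rk)ᵀ))) := by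
          simp only [Matrix.mul_assoc]
      _ = (Z₁ + Rk) * (Yk * P₀⁻¹) * P₀ * (P₀⁻¹ * (Ykᵀ * (Z₁ + Rk)ᵀ)) := by
          simp only [Matrix.mul_assoc]
  have hfinal : P₁ - 1 - M * P₀ * Mᵀ
      = C * (Top - W * P₀⁻¹ * Wᴴ) * Cᴴ + (Q + S * Rkᵀ + Rk * Sᵀ + Rk * Rrk * Rkᵀ) := by
    rw [Matrix.mul_sub, Matrix.sub_mul, hCTC, hCWP]
    abel
  rw [hfinal]
  exact h3.add hnoise

lemma contraction_step {n : ℕ} {ρ : ℝ} (hρ1 : 1 < ρ)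
    {P₀ P₁ M : Matrix (Fin n) (Fin n) ℝ}
    (hP₀ : P₀.PosDef) (hP₁ : P₁.PosDef) (hP₀s : P₀.IsHermitian)
    (hkey : (P₁ - 1 - M * P₀ * Mᵀ).PosSemidef)
    (hhigh : (ρ • (1 : Matrix (Fin n) (Fin n) ℝ) - P₁).PosSemidef) :
    ((1 - ρ⁻¹) • P₀⁻¹ - Mᵀ * P₁⁻¹ * M).PosSemidef := by
  have hρ0 : (0:ℝ) < ρ := lt_trans one_pos hρ1
  set c : ℝ := 1 - ρ⁻¹ with hc
  have hc0 : 0 < c := by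
    have : ρ⁻¹ < 1 := by rw [inv_lt_one_iff₀]; right; exact hρ1
    simp [hc]; linarith
  have hdet : IsUnit P₀.det := isUnit_iff_ne_zero.mpr hP₀.det_pos.ne'
  have hP₀invP₀ : P₀⁻¹ * P₀ = 1 := P₀.nonsing_inv_mul hdet
  have hP₀P₀inv : P₀ * P₀⁻¹ = 1 := P₀.mul_nonsing_inv hdet
  have step1 : (c • P₁ - M * P₀ * Mᵀ).PosSemidef := by
    have e1 : c • P₁ - M * P₀ * Mᵀ
        = (P₁ - 1 - M * P₀ * Mᵀ) + ρ⁻¹ • (ρ • (1 : Matrix (Fin n) (Fin n) ℝ) - P₁) := by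
      rw [smul_sub, smul_smul, inv_mul_cancel₀ hρ0.ne', one_smul, hc, sub_smul, one_smul]
      abel
    rw [e1]
    exact hkey.add (myPosSemidef_smul (by positivity) hhigh)
  have step2 : (c • P₀ - (P₀ * Mᵀ) * P₁⁻¹ * (P₀ * Mᵀ)ᴴ).PosSemidef := by
    apply mySchur_swap (myPosDef_smul hc0 hP₀) hP₁
    have hBH : (P₀ * Mᵀ)ᴴ = M * P₀ := by
      rw [Matrix.conjTranspose_eq_transpose_of_trivial, transpose_mul, transpose_transpose,
        ← Matrix.conjTranspose_eq_transpose_of_trivial, hP₀s.eq]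
    rw [hBH, mySmul_inv hc0.ne' hdet]
    have e2 : M * P₀ * (c⁻¹ • P₀⁻¹) * (P₀ * Mᵀ) = c⁻¹ • (M * P₀ * Mᵀ) := by
      rw [Matrix.mul_smul, Matrix.smul_mul]
      congr 1
      calc M * P₀ * P₀⁻¹ * (P₀ * Mᵀ) = M * (P₀ * P₀⁻¹ * P₀) * Mᵀ := by
            simp only [Matrix.mul_assoc]
        _ = M * P₀ * Mᵀ := by rw [hP₀P₀inv, Matrix.one_mul]
    rw [e2]
    have e3 : P₁ - c⁻¹ • (M * P₀ * Mᵀ) = c⁻¹ • (c • P₁ - M * P₀ * Mᵀ) := by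
      rw [smul_sub, smul_smul, inv_mul_cancel₀ hc0.ne', one_smul]
    rw [e3]
    exact myPosSemidef_smul (by positivity) step1
  have hP₀invH : (P₀⁻¹)ᴴ = P₀⁻¹ := by
    rw [conjTranspose_nonsing_inv, hP₀s.eq]
  have step3 := step2.mul_mul_conjTranspose_same P₀⁻¹
  have hBH : (P₀ * Mᵀ)ᴴ = M * P₀ := by
    rw [Matrix.conjTranspose_eq_transpose_of_trivial, transpose_mul, transpose_transpose,
      ← Matrix.conjTranspose_eq_transpose_of_trivial, hP₀s.eq]
  have e4 : P₀⁻¹ * (c • P₀ - (P₀ * Mᵀ) * P₁⁻¹ * (P₀ * Mᵀ)ᴴ) * (P₀⁻¹)ᴴ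
      = c • P₀⁻¹ - Mᵀ * P₁⁻¹ * M := by
    rw [hP₀invH, hBH, Matrix.mul_sub, Matrix.sub_mul]
    congr 1
    · rw [Matrix.mul_smul, Matrix.smul_mul, hP₀invP₀, Matrix.one_mul]
    · calc P₀⁻¹ * (P₀ * Mᵀ * P₁⁻¹ * (M * P₀)) * P₀⁻¹
          = (P₀⁻¹ * P₀) * (Mᵀ * P₁⁻¹ * M) * (P₀ * P₀⁻¹) := by
            simp only [Matrix.mul_assoc]
        _ = Mᵀ * P₁⁻¹ * M := by
            rw [hP₀invP₀, hP₀P₀inv, Matrix.one_mul, Matrix.mul_one]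
  rw [e4] at step3
  exact step3

/-- Action of a real matrix on a Euclidean-space vector. -/
noncomputable def matVec {n m : ℕ} (M : Matrix (Fin n) (Fin m) ℝ)
    (v : EuclideanSpace ℝ (Fin m)) : EuclideanSpace ℝ (Fin n) :=
  (WithLp.equiv 2 (Fin n → ℝ)).symm (M.mulVec (fun i => v i))

/-- Induced 2-norm (operator norm) of a real matrix. -/
noncomputable def opNorm2 {n m : ℕ} (M : Matrix (Fin n) (Fin m) ℝ) : ℝ :=
  ‖LinearMap.toContinuousLinearMap (Matrix.toEuclideanLin M)‖

lemma opNorm2_nonneg {n m : ℕ} (M : Matrix (Fin n) (Fin m) ℝ) : 0 ≤ opNorm2 M :=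
  norm_nonneg _

lemma matVec_eq {n m : ℕ} (M : Matrix (Fin n) (Fin m) ℝ) (u : EuclideanSpace ℝ (Fin m)) :
    matVec M u = (LinearMap.toContinuousLinearMap (Matrix.toEuclideanLin M)) u := rfl

lemma matVec_le {n m : ℕ} (M : Matrix (Fin n) (Fin m) ℝ) (u : EuclideanSpace ℝ (Fin m)) :
    ‖matVec M u‖ ≤ opNorm2 M * ‖u‖ := by
  rw [matVec_eq, opNorm2]
  exact ContinuousLinearMap.le_opNorm _ _

lemma matVec_mul {n m p : ℕ} (M : Matrix (Fin n) (Fin m) ℝ) (N : Matrix (Fin m) (Fin p) ℝ)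
    (u : EuclideanSpace ℝ (Fin p)) :
    matVec (M * N) u = matVec M (matVec N u) := by
  ext i
  simp [matVec, WithLp.equiv_symm_apply, ← Matrix.mulVec_mulVec]

lemma norm_eu {n : ℕ} (u : EuclideanSpace ℝ (Fin n)) :
    ‖u‖ = Real.sqrt ((fun i => u i) ⬝ᵥ (fun i => u i)) := by
  rw [EuclideanSpace.norm_eq]
  congr 1
  rw [dotProduct]
  apply Finset.sum_congr rfl
  intro i _
  simp [Real.norm_eq_abs, sq, abs_mul_abs_self]

/-- Robust trajectory boundedness from noisy data under a general
quadratic noise bound (Theorem 3 of the paper). -/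
theorem robust_bounded_trajectories_noisy_data
    {n m L T : ℕ}
    (A : ℕ → Matrix (Fin n) (Fin n) ℝ) (B : ℕ → Matrix (Fin n) (Fin m) ℝ)
    (X V Z : ℕ → Matrix (Fin n) (Fin L) ℝ)
    (U : ℕ → Matrix (Fin m) (Fin L) ℝ)
    (D : ℕ → Matrix (Fin n) (Fin L) ℝ)
    (hZ : ∀ k, Z k = X k + V k)
    (hdata : ∀ k < T, X (k + 1) = A k * X k + B k * U k + D k)
    (hrank : ∀ k < T, (Matrix.fromRows (Z k) (U k)).rank = n + m)
    (R : ℕ → Matrix (Fin n) (Fin L) ℝ)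
    (hR : ∀ k < T, R k = A k * V k - V (k + 1) - D k)
    (Qr : ℕ → Matrix (Fin n) (Fin n) ℝ) (Sr : ℕ → Matrix (Fin n) (Fin L) ℝ)
    (Rr : ℕ → Matrix (Fin L) (Fin L) ℝ)
    (hRr : ∀ k < T, (-(Rr k)).PosDef)
    (hnoise : ∀ k < T,
      (Qr k + Sr k * (R k)ᵀ + R k * (Sr k)ᵀ + R k * Rr k * (R k)ᵀ).PosSemidef)
    (η ρ : ℝ) (hη : 1 ≤ η) (hρ : η < ρ)
    (Y : ℕ → Matrix (Fin L) (Fin n) ℝ) (P : ℕ → Matrix (Fin n) (Fin n) ℝ)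
    (hPsymm : ∀ k ≤ T, (P k).IsSymm)
    (hLMI : ∀ k < T,
      (Matrix.fromBlocks
        (Matrix.fromBlocks (P (k + 1) - 1 - Qr k) (-(Sr k))
          (-((Sr k)ᵀ)) (-(Rr k)))
        (Matrix.fromRows (Z (k + 1) * Y k) (Y k))
        (Matrix.fromCols ((Y k)ᵀ * (Z (k + 1))ᵀ) ((Y k)ᵀ))
        (P k)).PosDef)
    (heq : ∀ k < T, Z k * Y k = P k)
    (hPlow : ∀ k ≤ T, (P k - η • (1 : Matrix (Fin n) (Fin n) ℝ)).PosSemidef)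
    (hPhigh : ∀ k ≤ T, (ρ • (1 : Matrix (Fin n) (Fin n) ℝ) - P k).PosSemidef)
    (b : ℝ) (hb : ∀ j < T, opNorm2 (B j) ≤ b)
    (K : ℕ → Matrix (Fin m) (Fin n) ℝ)
    (hK : ∀ k < T, K k = U k * Y k * (P k)⁻¹) :
    ∀ (x v d : ℕ → EuclideanSpace ℝ (Fin n)),
      (∀ k < T, x (k + 1) =
        matVec (A k + B k * K k) (x k) + matVec (B k * K k) (v k) + d k) →
      ∀ k ≤ T,
        ‖x k‖ ≤ Real.sqrt (ρ / η) * Real.sqrt ((1 - 1 / ρ) ^ k) * ‖x 0‖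
          + b * (∑ j ∈ Finset.range k,
              Real.sqrt (ρ / η) * Real.sqrt ((1 - 1 / ρ) ^ (k - 1 - j)) *
                opNorm2 (K j)) * (⨆ j : Fin k, ‖v (j : ℕ)‖)
          + (∑ j ∈ Finset.range k,
              Real.sqrt (ρ / η) * Real.sqrt ((1 - 1 / ρ) ^ (k - 1 - j))) *
              (⨆ j : Fin k, ‖d (j : ℕ)‖) := by
  intro x v d hx k hkT
  have hη0 : (0:ℝ) < η := lt_of_lt_of_le one_pos hη
  have hρ1 : (1:ℝ) < ρ := lt_of_le_of_lt hη hρ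
  have hρ0 : (0:ℝ) < ρ := lt_trans one_pos hρ1
  set c : ℝ := 1 - 1/ρ with hcdef
  have hcinv : c = 1 - ρ⁻¹ := by rw [hcdef, one_div]
  have hc0 : 0 ≤ c := by
    have : ρ⁻¹ < 1 := by rw [inv_lt_one_iff₀]; right; exact hρ1
    rw [hcinv]; linarith
  -- P is positive definite along the horizon
  have hPpos : ∀ j, j ≤ T → (P j).PosDef := by
    intro j hj
    have h1 : (P j - η • 1 + η • 1).PosDef :=
      Matrix.PosDef.posSemidef_add (hPlow j hj) (myPosDef_one_smul hη0)
    simpa using h1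
  set G : ℕ → ℝ := fun j => Real.sqrt η⁻¹ * (b * opNorm2 (K j) * ‖v j‖ + ‖d j‖) with hGdef
  set e : ℕ → ℝ := fun j => Real.sqrt (qf (P j)⁻¹ (fun i => x j i)) with hedef
  -- upper bound of P-norm by euclidean norm
  have hqub : ∀ j, j ≤ T → ∀ u : EuclideanSpace ℝ (Fin n),
      Real.sqrt (qf (P j)⁻¹ (fun i => u i)) ≤ Real.sqrt η⁻¹ * ‖u‖ := by
    intro j hj u
    have h1 := myInv_upper hη0 (hPpos j hj) (hPlow j hj)
    have h2 := qf_mono h1 (fun i => u i)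
    rw [qf_smul] at h2
    have h3 : qf (1 : Matrix (Fin n) (Fin n) ℝ) (fun i => u i)
        = (fun i => u i) ⬝ᵥ (fun i => u i) := by simp [qf, one_mulVec]
    rw [h3] at h2
    calc Real.sqrt (qf (P j)⁻¹ (fun i => u i))
        ≤ Real.sqrt (η⁻¹ * ((fun i => u i) ⬝ᵥ (fun i => u i))) := Real.sqrt_le_sqrt h2
      _ = Real.sqrt η⁻¹ * Real.sqrt ((fun i => u i) ⬝ᵥ (fun i => u i)) :=
          Real.sqrt_mul (by positivity) _
      _ = Real.sqrt η⁻¹ * ‖u‖ := by rw [norm_eu]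
  -- lower bound
  have hnub : ∀ j, j ≤ T → ‖x j‖ ≤ Real.sqrt ρ * e j := by
    intro j hj
    have h1 := myInv_lower hρ0 (hPpos j hj) (hPhigh j hj)
    have h2 := qf_mono h1 (fun i => x j i)
    rw [qf_smul] at h2
    have h3 : qf (1 : Matrix (Fin n) (Fin n) ℝ) (fun i => x j i)
        = (fun i => x j i) ⬝ᵥ (fun i => x j i) := by simp [qf, one_mulVec]
    rw [h3] at h2
    have h4 : (fun i => x j i) ⬝ᵥ (fun i => x j i)
        ≤ ρ * qf (P j)⁻¹ (fun i => x j i) := by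
      have h5 := mul_le_mul_of_nonneg_left h2 hρ0.le
      rw [← mul_assoc, mul_inv_cancel₀ hρ0.ne', one_mul] at h5
      exact h5
    calc ‖x j‖ = Real.sqrt ((fun i => x j i) ⬝ᵥ (fun i => x j i)) := norm_eu _
      _ ≤ Real.sqrt (ρ * qf (P j)⁻¹ (fun i => x j i)) := Real.sqrt_le_sqrt h4
      _ = Real.sqrt ρ * e j := by rw [Real.sqrt_mul hρ0.le, hedef]
  -- one-step decrease
  have hstep : ∀ j, j < T → e (j+1) ≤ Real.sqrt c * e j + G j := by
    intro j hjT
    have hjle : j ≤ T := le_of_lt hjT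
    have hj1le : j + 1 ≤ T := hjT
    have hP₀ := hPpos j hjle
    have hP₁ := hPpos (j+1) hj1le
    have hdet : IsUnit (P j).det := isUnit_iff_ne_zero.mpr hP₀.det_pos.ne'
    set M : Matrix (Fin n) (Fin n) ℝ := A j + B j * K j with hMdef
    -- closed loop representation
    have hZR : Z (j+1) + R j = A j * Z j + B j * U j := by
      rw [hR j hjT, hZ (j+1), hdata j hjT, hZ j, Matrix.mul_add]
      abel
    have M1 : M = (Z (j+1) + R j) * (Y j * (P j)⁻¹) := by
      rw [hMdef, hZR, Matrix.add_mul, hK j hjT]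
      congr 1
      · symm
        calc A j * Z j * (Y j * (P j)⁻¹) = A j * (Z j * Y j) * (P j)⁻¹ := by
              simp only [Matrix.mul_assoc]
          _ = A j * (P j * (P j)⁻¹) := by rw [heq j hjT]; simp only [Matrix.mul_assoc]
          _ = A j := by rw [(P j).mul_nonsing_inv hdet, Matrix.mul_one]
      · simp only [Matrix.mul_assoc]
    have keyM := key_matrix_ineq (Z (j+1)) (R j) (Qr j) (Sr j) (Rr j) (Y j)
      (P j) (P (j+1)) hP₀ hP₀.1 (hnoise j hjT) (hLMI j hjT) M M1
    have hcontr := contraction_step hρ1 hP₀ hP₁ hP₀.1 keyM (hPhigh (j+1) hj1le)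
    rw [← hcinv] at hcontr
    -- vector level
    set w : EuclideanSpace ℝ (Fin n) := matVec (B j * K j) (v j) + d j with hwdef
    have hsplit : (fun i => x (j+1) i)
        = (M *ᵥ (fun i => x j i)) + (fun i => w i) := by
      funext i
      rw [hx j hjT]
      simp [hwdef, hMdef, matVec, WithLp.equiv_symm_apply, PiLp.add_apply,
        Pi.add_apply, add_assoc]
    have hPinvpsd : ((P (j+1))⁻¹).PosSemidef := hP₁.inv.posSemidef
    have htri : e (j+1) ≤ Real.sqrt (qf (P (j+1))⁻¹ (M *ᵥ (fun i => x j i)))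
        + Real.sqrt (qf (P (j+1))⁻¹ (fun i => w i)) := by
      rw [hedef]
      simp only
      rw [hsplit]
      exact qf_sqrt_triangle hPinvpsd _ _
    have hterm1 : Real.sqrt (qf (P (j+1))⁻¹ (M *ᵥ (fun i => x j i)))
        ≤ Real.sqrt c * e j := by
      have hq1 : qf (P (j+1))⁻¹ (M *ᵥ (fun i => x j i))
          = qf (Mᵀ * (P (j+1))⁻¹ * M) (fun i => x j i) := qf_conj _ _ _
      have hq2 : qf (Mᵀ * (P (j+1))⁻¹ * M) (fun i => x j i)
          ≤ qf (c • (P j)⁻¹) (fun i => x j i) := qf_mono hcontr _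
      rw [qf_smul] at hq2
      calc Real.sqrt (qf (P (j+1))⁻¹ (M *ᵥ (fun i => x j i)))
          ≤ Real.sqrt (c * qf (P j)⁻¹ (fun i => x j i)) := by
            rw [hq1]; exact Real.sqrt_le_sqrt hq2
        _ = Real.sqrt c * e j := by rw [Real.sqrt_mul hc0, hedef]
    have hterm2 : Real.sqrt (qf (P (j+1))⁻¹ (fun i => w i)) ≤ G j := by
      have hwn : ‖w‖ ≤ b * opNorm2 (K j) * ‖v j‖ + ‖d j‖ := by
        have h6 : ‖matVec (B j * K j) (v j)‖ ≤ b * opNorm2 (K j) * ‖v j‖ := by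
          rw [matVec_mul]
          calc ‖matVec (B j) (matVec (K j) (v j))‖
              ≤ opNorm2 (B j) * ‖matVec (K j) (v j)‖ := matVec_le _ _
            _ ≤ opNorm2 (B j) * (opNorm2 (K j) * ‖v j‖) := by
                apply mul_le_mul_of_nonneg_left (matVec_le _ _) (opNorm2_nonneg _)
            _ ≤ b * (opNorm2 (K j) * ‖v j‖) := by
                apply mul_le_mul_of_nonneg_right (hb j hjT)
                exact mul_nonneg (opNorm2_nonneg _) (norm_nonneg _)
            _ = b * opNorm2 (K j) * ‖v j‖ := by ring
        calc ‖w‖ ≤ ‖matVec (B j * K j) (v j)‖ + ‖d j‖ := norm_add_le _ _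
          _ ≤ b * opNorm2 (K j) * ‖v j‖ + ‖d j‖ := by linarith
      calc Real.sqrt (qf (P (j+1))⁻¹ (fun i => w i))
          ≤ Real.sqrt η⁻¹ * ‖w‖ := hqub (j+1) hj1le w
        _ ≤ Real.sqrt η⁻¹ * (b * opNorm2 (K j) * ‖v j‖ + ‖d j‖) := by
            apply mul_le_mul_of_nonneg_left hwn (Real.sqrt_nonneg _)
        _ = G j := by rw [hGdef]
    linarith [htri, hterm1, hterm2]
  -- the main induction
  have main : ∀ j, j ≤ T → e j ≤ Real.sqrt (c ^ j) * e 0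
      + ∑ i ∈ Finset.range j, Real.sqrt (c ^ (j - 1 - i)) * G i := by
    intro j
    induction j with
    | zero => intro _; simp
    | succ j ih =>
      intro hj1
      have hjT : j < T := hj1
      have ihj := ih (le_of_lt hjT)
      have hGs : ∀ i, Real.sqrt c * (Real.sqrt (c ^ (j - 1 - i)) * G i)
          = Real.sqrt (c * c ^ (j - 1 - i)) * G i := by
        intro i
        rw [← mul_assoc, ← Real.sqrt_mul hc0]
      calc e (j+1) ≤ Real.sqrt c * e j + G j := hstep j hjT
        _ ≤ Real.sqrt c * (Real.sqrt (c ^ j) * e 0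
            + ∑ i ∈ Finset.range j, Real.sqrt (c ^ (j - 1 - i)) * G i) + G j := by
            have := mul_le_mul_of_nonneg_left ihj (Real.sqrt_nonneg c)
            linarith
        _ = Real.sqrt (c ^ (j+1)) * e 0
            + ∑ i ∈ Finset.range (j+1), Real.sqrt (c ^ (j + 1 - 1 - i)) * G i := by
            rw [Finset.sum_range_succ, mul_add, Finset.mul_sum]
            have h1 : Real.sqrt c * (Real.sqrt (c ^ j) * e 0)
                = Real.sqrt (c ^ (j+1)) * e 0 := by
              rw [← mul_assoc, ← Real.sqrt_mul hc0, ← pow_succ']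
            have h2 : ∀ i ∈ Finset.range j,
                Real.sqrt c * (Real.sqrt (c ^ (j - 1 - i)) * G i)
                = Real.sqrt (c ^ (j + 1 - 1 - i)) * G i := by
              intro i hi
              have hij : i < j := Finset.mem_range.mp hi
              have hexp : j + 1 - 1 - i = (j - 1 - i) + 1 := by omega
              rw [hexp, ← mul_assoc, ← Real.sqrt_mul hc0, ← pow_succ']
            rw [Finset.sum_congr rfl h2, h1]
            have h3 : j + 1 - 1 - j = 0 := by omega
            rw [h3, pow_zero, Real.sqrt_one, one_mul]
            ring
  -- finish
  have hsq : Real.sqrt ρ * Real.sqrt η⁻¹ = Real.sqrt (ρ / η) := by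
    rw [← Real.sqrt_mul hρ0.le, div_eq_mul_inv]
  have hVs : ∀ j, j < k → ‖v j‖ ≤ ⨆ i : Fin k, ‖v (i : ℕ)‖ := by
    intro j hj
    exact le_ciSup (f := fun i : Fin k => ‖v (i : ℕ)‖)
      (Set.Finite.bddAbove (Set.finite_range _)) (⟨j, hj⟩ : Fin k)
  have hDs : ∀ j, j < k → ‖d j‖ ≤ ⨆ i : Fin k, ‖d (i : ℕ)‖ := by
    intro j hj
    exact le_ciSup (f := fun i : Fin k => ‖d (i : ℕ)‖)
      (Set.Finite.bddAbove (Set.finite_range _)) (⟨j, hj⟩ : Fin k)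
  have he0 : e 0 ≤ Real.sqrt η⁻¹ * ‖x 0‖ := hqub 0 (Nat.zero_le T) (x 0)
  calc ‖x k‖ ≤ Real.sqrt ρ * e k := hnub k hkT
    _ ≤ Real.sqrt ρ * (Real.sqrt (c ^ k) * e 0
        + ∑ j ∈ Finset.range k, Real.sqrt (c ^ (k - 1 - j)) * G j) :=
        mul_le_mul_of_nonneg_left (main k hkT) (Real.sqrt_nonneg ρ)
    _ = Real.sqrt ρ * (Real.sqrt (c ^ k) * e 0)
        + ∑ j ∈ Finset.range k, Real.sqrt ρ * (Real.sqrt (c ^ (k - 1 - j)) * G j) := by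
        rw [mul_add, Finset.mul_sum]
    _ ≤ Real.sqrt ρ * (Real.sqrt (c ^ k) * (Real.sqrt η⁻¹ * ‖x 0‖))
        + ∑ j ∈ Finset.range k, Real.sqrt ρ * (Real.sqrt (c ^ (k - 1 - j)) * G j) := by
        have : Real.sqrt ρ * (Real.sqrt (c ^ k) * e 0)
            ≤ Real.sqrt ρ * (Real.sqrt (c ^ k) * (Real.sqrt η⁻¹ * ‖x 0‖)) := by
          apply mul_le_mul_of_nonneg_left _ (Real.sqrt_nonneg ρ)
          exact mul_le_mul_of_nonneg_left he0 (Real.sqrt_nonneg _)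
        linarith
    _ ≤ Real.sqrt (ρ / η) * Real.sqrt (c ^ k) * ‖x 0‖
        + (b * (∑ j ∈ Finset.range k,
            Real.sqrt (ρ / η) * Real.sqrt (c ^ (k - 1 - j)) * opNorm2 (K j))
            * (⨆ i : Fin k, ‖v (i : ℕ)‖)
          + (∑ j ∈ Finset.range k, Real.sqrt (ρ / η) * Real.sqrt (c ^ (k - 1 - j)))
            * (⨆ i : Fin k, ‖d (i : ℕ)‖)) := by
        have hfirst : Real.sqrt ρ * (Real.sqrt (c ^ k) * (Real.sqrt η⁻¹ * ‖x 0‖))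
            = Real.sqrt (ρ / η) * Real.sqrt (c ^ k) * ‖x 0‖ := by
          rw [← hsq]; ring
        rw [hfirst]
        apply add_le_add_right
        have hsum : ∑ j ∈ Finset.range k, Real.sqrt ρ * (Real.sqrt (c ^ (k - 1 - j)) * G j)
            ≤ ∑ j ∈ Finset.range k,
              (b * (Real.sqrt (ρ / η) * Real.sqrt (c ^ (k - 1 - j)) * opNorm2 (K j))
                * (⨆ i : Fin k, ‖v (i : ℕ)‖)
              + (Real.sqrt (ρ / η) * Real.sqrt (c ^ (k - 1 - j)))
                * (⨆ i : Fin k, ‖d (i : ℕ)‖)) := by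
          apply Finset.sum_le_sum
          intro j hj
          have hjk : j < k := Finset.mem_range.mp hj
          have hjT : j < T := lt_of_lt_of_le hjk hkT
          have hb0 : 0 ≤ b := le_trans (opNorm2_nonneg (B j)) (hb j hjT)
          have ht : Real.sqrt ρ * (Real.sqrt (c ^ (k - 1 - j)) * G j)
              = Real.sqrt (ρ / η) * Real.sqrt (c ^ (k - 1 - j))
                * (b * opNorm2 (K j) * ‖v j‖ + ‖d j‖) := by
            rw [hGdef, ← hsq]; ring
          rw [ht]
          have t1 : b * opNorm2 (K j) * ‖v j‖
              ≤ b * opNorm2 (K j) * (⨆ i : Fin k, ‖v (i : ℕ)‖) :=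
            mul_le_mul_of_nonneg_left (hVs j hjk) (mul_nonneg hb0 (opNorm2_nonneg _))
          have t2 : ‖d j‖ ≤ ⨆ i : Fin k, ‖d (i : ℕ)‖ := hDs j hjk
          calc Real.sqrt (ρ / η) * Real.sqrt (c ^ (k - 1 - j))
                * (b * opNorm2 (K j) * ‖v j‖ + ‖d j‖)
              ≤ Real.sqrt (ρ / η) * Real.sqrt (c ^ (k - 1 - j))
                * (b * opNorm2 (K j) * (⨆ i : Fin k, ‖v (i : ℕ)‖)
                  + (⨆ i : Fin k, ‖d (i : ℕ)‖)) := by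
                apply mul_le_mul_of_nonneg_left _ (by positivity)
                linarith
            _ = b * (Real.sqrt (ρ / η) * Real.sqrt (c ^ (k - 1 - j)) * opNorm2 (K j))
                * (⨆ i : Fin k, ‖v (i : ℕ)‖)
              + (Real.sqrt (ρ / η) * Real.sqrt (c ^ (k - 1 - j)))
                * (⨆ i : Fin k, ‖d (i : ℕ)‖) := by ring
        calc ∑ j ∈ Finset.range k, Real.sqrt ρ * (Real.sqrt (c ^ (k - 1 - j)) * G j)
            ≤ _ := hsum
          _ = b * (∑ j ∈ Finset.range k,
                Real.sqrt (ρ / η) * Real.sqrt (c ^ (k - 1 - j)) * opNorm2 (K j))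
                * (⨆ i : Fin k, ‖v (i : ℕ)‖)
              + (∑ j ∈ Finset.range k, Real.sqrt (ρ / η) * Real.sqrt (c ^ (k - 1 - j)))
                * (⨆ i : Fin k, ‖d (i : ℕ)‖) := by
              rw [Finset.sum_add_distrib, Finset.mul_sum, Finset.sum_mul, Finset.sum_mul]
    _ = Real.sqrt (ρ / η) * Real.sqrt (c ^ k) * ‖x 0‖
          + b * (∑ j ∈ Finset.range k,
              Real.sqrt (ρ / η) * Real.sqrt (c ^ (k - 1 - j)) * opNorm2 (K j))
              * (⨆ i : Fin k, ‖v (i : ℕ)‖)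
          + (∑ j ∈ Finset.range k, Real.sqrt (ρ / η) * Real.sqrt (c ^ (k - 1 - j)))
              * (⨆ i : Fin k, ‖d (i : ℕ)‖) := by ring
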